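/- arXiv:2308.09173 — 2 statements merged into one kernel-verified Lean document; each statement's English description precedes it below -/
import Mathlib

section
/- Every irreducible root system of type different from A₁ and from C_n (n ≥ 2) contains a pair of linearly independent, non-orthogonal long roots. -/
open RealInnerProductSpace

/-- The standard basis vector `ε_i` of Euclidean space. -/
noncomputable def stdVec {n : ℕ} (i : Fin n) : EuclideanSpace ℝ (Fin n) :=
  EuclideanSpace.single i (1 : ℝ)

/-- The roots `±ε_μ ± ε_ν` (μ ≠ ν); this is the root system of type `D_n`. -/
noncomputable def rootsDn (n : ℕ) : Set (EuclideanSpace ℝ (Fin n)) :=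
  {v | ∃ i j : Fin n, ∃ s t : ℝ, i ≠ j ∧ (s = 1 ∨ s = -1) ∧ (t = 1 ∨ t = -1) ∧
    v = s • stdVec i + t • stdVec j}

/-- The root system of type `A_n` realized in `ℝ^{n+1}`. -/
noncomputable def rootsAn (n : ℕ) : Set (EuclideanSpace ℝ (Fin (n + 1))) :=
  {v | ∃ i j : Fin (n + 1), i ≠ j ∧ v = stdVec i - stdVec j}

/-- The root system of type `B_n`: `{±ε_μ ± ε_ν} ∪ {±ε_μ}`. -/
noncomputable def rootsBn (n : ℕ) : Set (EuclideanSpace ℝ (Fin n)) :=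
  rootsDn n ∪ {v | ∃ i : Fin n, ∃ s : ℝ, (s = 1 ∨ s = -1) ∧ v = s • stdVec i}

/-- The root system of type `C_n`: `{±ε_μ ± ε_ν} ∪ {±2ε_μ}`. -/
noncomputable def rootsCn (n : ℕ) : Set (EuclideanSpace ℝ (Fin n)) :=
  rootsDn n ∪ {v | ∃ i : Fin n, ∃ s : ℝ, (s = 2 ∨ s = -2) ∧ v = s • stdVec i}

/-- The half-integer roots of `E₈`: vectors with all coordinates `±1/2` and an
even number of minus signs (equivalently, positive product of coordinates). -/
def halfRootsE8 : Set (EuclideanSpace ℝ (Fin 8)) :=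
  {v | (∀ i, v i = 1/2 ∨ v i = -1/2) ∧ 0 < ∏ i, v i}

/-- The root system of type `E₈` in `ℝ^8`. -/
noncomputable def rootsE8 : Set (EuclideanSpace ℝ (Fin 8)) :=
  rootsDn 8 ∪ halfRootsE8

/-- The root system of type `E₇`, realized as the roots of `E₈` orthogonal to
`ε₇ + ε₈` (in `0`-indexed notation `ε_6 + ε_7`). -/
noncomputable def rootsE7 : Set (EuclideanSpace ℝ (Fin 8)) :=
  {v ∈ rootsE8 | ⟪v, stdVec 6 + stdVec 7⟫ = 0}

/-- The root system of type `E₆`, realized as the roots of `E₇` orthogonal in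
addition to `ε₆ − ε₇` (in `0`-indexed notation `ε_5 - ε_6`). -/
noncomputable def rootsE6 : Set (EuclideanSpace ℝ (Fin 8)) :=
  {v ∈ rootsE7 | ⟪v, stdVec 5 - stdVec 6⟫ = 0}

/-- The root system of type `F₄` in `ℝ⁴`:
`{±ε_μ ± ε_ν} ∪ {±ε_μ} ∪ {(±1/2, ±1/2, ±1/2, ±1/2)}`. -/
noncomputable def rootsF4 : Set (EuclideanSpace ℝ (Fin 4)) :=
  rootsBn 4 ∪ {v | ∀ i, v i = 1/2 ∨ v i = -1/2}

/-- The root system of type `G₂`, realized in the hyperplane of `ℝ³`: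
short roots `ε_i − ε_j` and long roots `±(2ε_i − ε_j − ε_k)`. -/
noncomputable def rootsG2 : Set (EuclideanSpace ℝ (Fin 3)) :=
  {v | ∃ i j : Fin 3, i ≠ j ∧ v = stdVec i - stdVec j} ∪
  {v | ∃ i j k : Fin 3, i ≠ j ∧ i ≠ k ∧ j ≠ k ∧
    (v = (2 : ℝ) • stdVec i - stdVec j - stdVec k ∨
     v = -((2 : ℝ) • stdVec i - stdVec j - stdVec k))}

/-- The types of irreducible root systems. -/
inductive RSType : Type
  | A : ℕ → RSType
  | B : ℕ → RSType
  | C : ℕ → RSType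
  | D : ℕ → RSType
  | E6 : RSType
  | E7 : RSType
  | E8 : RSType
  | F4 : RSType
  | G2 : RSType

/-- The dimension of the ambient Euclidean space used in our realization. -/
def RSType.dim : RSType → ℕ
  | .A n => n + 1
  | .B n => n
  | .C n => n
  | .D n => n
  | .E6 => 8
  | .E7 => 8
  | .E8 => 8
  | .F4 => 4
  | .G2 => 3

/-- Rank restrictions so that the listed types are exactly the irreducible root
systems, each appearing once (`A_n, n ≥ 1`; `B_n, n ≥ 3`; `C_n, n ≥ 2`;
`D_n, n ≥ 3`; the exceptional types). -/
def RSType.valid : RSType → Prop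
  | .A n => 1 ≤ n
  | .B n => 3 ≤ n
  | .C n => 2 ≤ n
  | .D n => 3 ≤ n
  | _ => True

/-- The set of roots of each type, in the concrete realization. -/
noncomputable def RSType.roots : (t : RSType) → Set (EuclideanSpace ℝ (Fin t.dim))
  | .A n => rootsAn n
  | .B n => rootsBn n
  | .C n => rootsCn n
  | .D n => rootsDn n
  | .E6 => rootsE6
  | .E7 => rootsE7
  | .E8 => rootsE8
  | .F4 => rootsF4
  | .G2 => rootsG2

/-- The long roots of a root system: the roots of maximal length. -/
noncomputable def longRoots {m : ℕ} (Δ : Set (EuclideanSpace ℝ (Fin m))) :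
    Set (EuclideanSpace ℝ (Fin m)) :=
  {v | v ∈ Δ ∧ ∀ w ∈ Δ, ‖w‖ ≤ ‖v‖}


section Helpers

lemma stdVec_apply {n : ℕ} (i j : Fin n) : stdVec i j = if j = i then 1 else 0 := by
  simp [stdVec, EuclideanSpace.single_apply]

lemma inner_stdVec {n : ℕ} (i j : Fin n) : ⟪stdVec i, stdVec j⟫ = if i = j then 1 else 0 := by
  simp [stdVec, EuclideanSpace.inner_single_left, EuclideanSpace.single_apply, eq_comm]

lemma sum_sq_pair {n : ℕ} {i j : Fin n} (hij : i ≠ j) (s t : ℝ) :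
    ∑ k, ((s • stdVec i + t • stdVec j) k) ^ 2 = s ^ 2 + t ^ 2 := by
  have h : ∀ k, ((s • stdVec i + t • stdVec j) k) ^ 2
      = (if k = i then s ^ 2 else 0) + (if k = j then t ^ 2 else 0) := by
    intro k
    simp only [PiLp.add_apply, PiLp.smul_apply, stdVec_apply, smul_eq_mul]
    by_cases hi : k = i <;> by_cases hj : k = j
    · exact absurd (hi ▸ hj) hij
    all_goals simp [hi, hj, hij, hij.symm]; try ring
  rw [Finset.sum_congr rfl fun k _ => h k, Finset.sum_add_distrib]
  simp

lemma sum_sq_triple {n : ℕ} {i j k : Fin n} (hij : i ≠ j) (hik : i ≠ k) (hjk : j ≠ k)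
    (a b c : ℝ) :
    ∑ l, ((a • stdVec i + b • stdVec j + c • stdVec k) l) ^ 2 = a ^ 2 + b ^ 2 + c ^ 2 := by
  have h : ∀ l, ((a • stdVec i + b • stdVec j + c • stdVec k) l) ^ 2
      = (if l = i then a ^ 2 else 0) + (if l = j then b ^ 2 else 0)
        + (if l = k then c ^ 2 else 0) := by
    intro l
    simp only [PiLp.add_apply, PiLp.smul_apply, stdVec_apply, smul_eq_mul]
    by_cases hi : l = i <;> by_cases hj : l = j <;> by_cases hk : l = k
    · exact absurd (hi ▸ hj) hij
    · exact absurd (hi ▸ hj) hij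
    · exact absurd (hi ▸ hk) hik
    all_goals simp [hi, hj, hk, hij, hij.symm, hik, hik.symm, hjk, hjk.symm]; try ring
  rw [Finset.sum_congr rfl fun l _ => h l, Finset.sum_add_distrib, Finset.sum_add_distrib]
  simp

lemma sum_sq_single {n : ℕ} (i : Fin n) (s : ℝ) :
    ∑ k, ((s • stdVec i) k) ^ 2 = s ^ 2 := by
  have h : ∀ k, ((s • stdVec i) k) ^ 2 = if k = i then s ^ 2 else 0 := by
    intro k
    simp only [PiLp.smul_apply, stdVec_apply, smul_eq_mul]
    by_cases hi : k = i <;> simp [hi]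
  rw [Finset.sum_congr rfl fun k _ => h k]
  simp

lemma inner_pair {n : ℕ} (i j k : Fin n) (hjk : j ≠ k) (hij : i ≠ j) (hik : i ≠ k)
    (t u : ℝ) :
    ⟪stdVec i + t • stdVec j, stdVec i + u • stdVec k⟫ = 1 := by
  simp only [inner_add_left, inner_add_right, real_inner_smul_left, real_inner_smul_right,
    inner_stdVec]
  simp [hij, hik, hjk, hij.symm, hik.symm]

lemma li_pair {n : ℕ} (i j k : Fin n) (hjk : j ≠ k) (hij : i ≠ j) (hik : i ≠ k)
    (t u : ℝ) (ht : t ≠ 0) (hu : u ≠ 0) :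
    LinearIndependent ℝ ![stdVec i + t • stdVec j, stdVec i + u • stdVec k] := by
  rw [LinearIndependent.pair_iff]
  intro s r h
  have hjv := congrArg (fun x => x j) h
  have hkv := congrArg (fun x => x k) h
  simp only [PiLp.add_apply, PiLp.smul_apply, PiLp.zero_apply, stdVec_apply, smul_eq_mul,
    Pi.zero_apply] at hjv hkv
  simp only [if_true, Ne.symm hik, hjk, hjk.symm, if_false, ite_false, if_neg,
    mul_zero, mul_one, zero_add, add_zero] at hjv hkv
  simp [hjk, Ne.symm hik, Ne.symm hij, ht, hu] at hjv hkv
  exact ⟨hjv, hkv⟩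

lemma norm_le_of_sumsq {m : ℕ} (v w : EuclideanSpace ℝ (Fin m))
    (h : ∑ i, w i ^ 2 ≤ ∑ i, v i ^ 2) : ‖w‖ ≤ ‖v‖ := by
  rw [EuclideanSpace.norm_eq, EuclideanSpace.norm_eq]
  apply Real.sqrt_le_sqrt
  simpa [Real.norm_eq_abs, sq_abs] using h

lemma mem_longRoots_of {m : ℕ} {Δ : Set (EuclideanSpace ℝ (Fin m))}
    {v : EuclideanSpace ℝ (Fin m)} (hv : v ∈ Δ)
    (hmax : ∀ w ∈ Δ, ∑ i, w i ^ 2 ≤ ∑ i, v i ^ 2) : v ∈ longRoots Δ :=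
  ⟨hv, fun w hw => norm_le_of_sumsq v w (hmax w hw)⟩

lemma main_pair {m : ℕ} (Δ : Set (EuclideanSpace ℝ (Fin m))) (i j k : Fin m)
    (hij : i ≠ j) (hik : i ≠ k) (hjk : j ≠ k) (t u : ℝ)
    (ht : t = 1 ∨ t = -1) (hu : u = 1 ∨ u = -1)
    (h1 : stdVec i + t • stdVec j ∈ Δ) (h2 : stdVec i + u • stdVec k ∈ Δ)
    (hmax : ∀ w ∈ Δ, ∑ l, w l ^ 2 ≤ 2) :
    ∃ lam alpha : EuclideanSpace ℝ (Fin m),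
      lam ∈ longRoots Δ ∧ alpha ∈ longRoots Δ ∧
      LinearIndependent ℝ ![lam, alpha] ∧ ⟪lam, alpha⟫ ≠ 0 := by
  have t0 : t ≠ 0 := by rcases ht with rfl | rfl <;> norm_num
  have u0 : u ≠ 0 := by rcases hu with rfl | rfl <;> norm_num
  have s1 : ∑ l, ((stdVec i + t • stdVec j) l) ^ 2 = 2 := by
    rw [show stdVec i + t • stdVec j = (1 : ℝ) • stdVec i + t • stdVec j by rw [one_smul],
      sum_sq_pair hij]
    rcases ht with rfl | rfl <;> norm_num
  have s2 : ∑ l, ((stdVec i + u • stdVec k) l) ^ 2 = 2 := by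
    rw [show stdVec i + u • stdVec k = (1 : ℝ) • stdVec i + u • stdVec k by rw [one_smul],
      sum_sq_pair hik]
    rcases hu with rfl | rfl <;> norm_num
  refine ⟨_, _, mem_longRoots_of h1 (fun w hw => ?_), mem_longRoots_of h2 (fun w hw => ?_),
    li_pair i j k hjk hij hik t u t0 u0, ?_⟩
  · rw [s1]; exact hmax w hw
  · rw [s2]; exact hmax w hw
  · rw [inner_pair i j k hjk hij hik]; norm_num

lemma sumsq_Dn {n : ℕ} : ∀ w ∈ rootsDn n, ∑ l, w l ^ 2 = 2 := by
  rintro w ⟨i, j, s, t, hij, hs, ht, rfl⟩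
  rw [sum_sq_pair hij]
  rcases hs with rfl | rfl <;> rcases ht with rfl | rfl <;> norm_num

lemma sumsq_An {n : ℕ} : ∀ w ∈ rootsAn n, ∑ l, w l ^ 2 = 2 := by
  rintro w ⟨i, j, hij, rfl⟩
  rw [show stdVec i - stdVec j = (1 : ℝ) • stdVec i + (-1 : ℝ) • stdVec j by
    rw [one_smul, neg_one_smul, sub_eq_add_neg], sum_sq_pair hij]
  norm_num

lemma sumsq_Bn {n : ℕ} : ∀ w ∈ rootsBn n, ∑ l, w l ^ 2 ≤ 2 := by
  rintro w (hw | ⟨i, s, hs, rfl⟩)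
  · exact (sumsq_Dn w hw).le
  · rw [sum_sq_single]
    rcases hs with rfl | rfl <;> norm_num

lemma sumsq_half {w : EuclideanSpace ℝ (Fin 8)} (hw : ∀ i, w i = 1/2 ∨ w i = -1/2) :
    ∑ l, w l ^ 2 = 2 := by
  have h : ∀ l : Fin 8, w l ^ 2 = 1/4 := by
    intro l; rcases hw l with h | h <;> rw [h] <;> norm_num
  rw [Finset.sum_congr rfl fun l _ => h l]
  simp
  norm_num

lemma sumsq_E8 : ∀ w ∈ rootsE8, ∑ l, w l ^ 2 = 2 := by
  rintro w (hw | ⟨hw, -⟩)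
  · exact sumsq_Dn w hw
  · exact sumsq_half hw

lemma sumsq_F4 : ∀ w ∈ rootsF4, ∑ l, w l ^ 2 ≤ 2 := by
  rintro w (hw | hw)
  · exact sumsq_Bn w hw
  · have h : ∀ l : Fin 4, w l ^ 2 = 1/4 := by
      intro l; rcases hw l with h | h <;> rw [h] <;> norm_num
    rw [Finset.sum_congr rfl fun l _ => h l]
    norm_num

lemma g2_long_eq (i j k : Fin 3) :
    (2 : ℝ) • stdVec i - stdVec j - stdVec k
      = (2 : ℝ) • stdVec i + (-1 : ℝ) • stdVec j + (-1 : ℝ) • stdVec k := by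
  simp [sub_eq_add_neg, neg_one_smul]

lemma sumsq_G2 : ∀ w ∈ rootsG2, ∑ l, w l ^ 2 ≤ 6 := by
  rintro w (⟨i, j, hij, rfl⟩ | ⟨i, j, k, hij, hik, hjk, (rfl | rfl)⟩)
  · rw [show stdVec i - stdVec j = (1 : ℝ) • stdVec i + (-1 : ℝ) • stdVec j by
      rw [one_smul, neg_one_smul, sub_eq_add_neg], sum_sq_pair hij]
    norm_num
  · rw [g2_long_eq, sum_sq_triple hij hik hjk]; norm_num
  · rw [show -((2 : ℝ) • stdVec i - stdVec j - stdVec k)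
        = (-2 : ℝ) • stdVec i + (1 : ℝ) • stdVec j + (1 : ℝ) • stdVec k by
      rw [g2_long_eq]; module, sum_sq_triple hij hik hjk]
    norm_num

end Helpers


lemma main_G2 :
    ∃ lam alpha : EuclideanSpace ℝ (Fin 3),
      lam ∈ longRoots rootsG2 ∧ alpha ∈ longRoots rootsG2 ∧
      LinearIndependent ℝ ![lam, alpha] ∧ ⟪lam, alpha⟫ ≠ 0 := by
  set lam : EuclideanSpace ℝ (Fin 3) := (2 : ℝ) • stdVec 0 - stdVec 1 - stdVec 2 with hlam
  set alp : EuclideanSpace ℝ (Fin 3) :=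
    -((2 : ℝ) • stdVec 1 - stdVec 0 - stdVec 2) with halp
  have hlmem : lam ∈ rootsG2 :=
    Or.inr ⟨0, 1, 2, by decide, by decide, by decide, Or.inl rfl⟩
  have hamem : alp ∈ rootsG2 :=
    Or.inr ⟨1, 0, 2, by decide, by decide, by decide, Or.inr rfl⟩
  have hlsq : ∑ l, lam l ^ 2 = 6 := by
    rw [hlam, g2_long_eq, sum_sq_triple (by decide) (by decide) (by decide)]
    norm_num
  have hasq : ∑ l, alp l ^ 2 = 6 := by
    rw [halp, show -((2 : ℝ) • stdVec 1 - stdVec 0 - stdVec 2)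
        = (-2 : ℝ) • stdVec 1 + (1 : ℝ) • stdVec 0 + (1 : ℝ) • stdVec 2 by
      rw [g2_long_eq (1 : Fin 3) 0 2]; module,
      sum_sq_triple (by decide) (by decide) (by decide)]
    norm_num
  refine ⟨lam, alp, mem_longRoots_of hlmem (fun w hw => ?_),
    mem_longRoots_of hamem (fun w hw => ?_), ?_, ?_⟩
  · rw [hlsq]; exact sumsq_G2 w hw
  · rw [hasq]; exact sumsq_G2 w hw
  · rw [LinearIndependent.pair_iff]
    intro s r h
    have h0 := congrArg (fun x => x 0) h
    have h1 := congrArg (fun x => x 1) h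
    simp only [hlam, halp, PiLp.add_apply, PiLp.sub_apply, PiLp.neg_apply,
      PiLp.smul_apply, PiLp.zero_apply, Pi.zero_apply, stdVec_apply, smul_eq_mul] at h0 h1
    simp at h0 h1
    constructor <;> linarith
  · rw [hlam, halp]
    simp only [inner_neg_right, inner_sub_left, inner_sub_right, real_inner_smul_left,
      real_inner_smul_right, inner_stdVec]
    simp
    norm_num

/-- Every irreducible root system of type different from `A₁` and from `C_n`
(`n ≥ 2`) contains a pair of linearly independent, non-orthogonal long roots. -/
theorem exists_nonorthogonal_long_roots (t : RSType) (hval : t.valid)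
    (hA1 : t ≠ .A 1) (hC : ∀ n, t ≠ .C n) :
    ∃ lam alpha : EuclideanSpace ℝ (Fin t.dim),
      lam ∈ longRoots t.roots ∧ alpha ∈ longRoots t.roots ∧
      LinearIndependent ℝ ![lam, alpha] ∧ ⟪lam, alpha⟫ ≠ 0 := by
  cases t with
  | A n =>
    have hv : 1 ≤ n := hval
    have hn : 2 ≤ n := by
      have : n ≠ 1 := fun h => hA1 (by rw [h])
      omega
    set i : Fin (n + 1) := ⟨0, by omega⟩ with hi
    set j : Fin (n + 1) := ⟨1, by omega⟩ with hj
    set k : Fin (n + 1) := ⟨2, by omega⟩ with hk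
    have hij : i ≠ j := by simp [hi, hj, Fin.ext_iff]
    have hik : i ≠ k := by simp [hi, hk, Fin.ext_iff]
    have hjk : j ≠ k := by simp [hj, hk, Fin.ext_iff]
    exact main_pair (rootsAn n) i j k hij hik hjk (-1) (-1) (Or.inr rfl) (Or.inr rfl)
      ⟨i, j, hij, by rw [neg_one_smul, ← sub_eq_add_neg]⟩
      ⟨i, k, hik, by rw [neg_one_smul, ← sub_eq_add_neg]⟩
      (fun w hw => (sumsq_An w hw).le)
  | B n =>
    have hn : 3 ≤ n := hval
    set i : Fin n := ⟨0, by omega⟩ with hi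
    set j : Fin n := ⟨1, by omega⟩ with hj
    set k : Fin n := ⟨2, by omega⟩ with hk
    have hij : i ≠ j := by simp [hi, hj, Fin.ext_iff]
    have hik : i ≠ k := by simp [hi, hk, Fin.ext_iff]
    have hjk : j ≠ k := by simp [hj, hk, Fin.ext_iff]
    exact main_pair (rootsBn n) i j k hij hik hjk 1 1 (Or.inl rfl) (Or.inl rfl)
      (Or.inl ⟨i, j, 1, 1, hij, Or.inl rfl, Or.inl rfl, by simp⟩)
      (Or.inl ⟨i, k, 1, 1, hik, Or.inl rfl, Or.inl rfl, by simp⟩)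
      sumsq_Bn
  | C n => exact absurd rfl (hC n)
  | D n =>
    have hn : 3 ≤ n := hval
    set i : Fin n := ⟨0, by omega⟩ with hi
    set j : Fin n := ⟨1, by omega⟩ with hj
    set k : Fin n := ⟨2, by omega⟩ with hk
    have hij : i ≠ j := by simp [hi, hj, Fin.ext_iff]
    have hik : i ≠ k := by simp [hi, hk, Fin.ext_iff]
    have hjk : j ≠ k := by simp [hj, hk, Fin.ext_iff]
    exact main_pair (rootsDn n) i j k hij hik hjk 1 1 (Or.inl rfl) (Or.inl rfl)
      ⟨i, j, 1, 1, hij, Or.inl rfl, Or.inl rfl, by simp⟩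
      ⟨i, k, 1, 1, hik, Or.inl rfl, Or.inl rfl, by simp⟩
      (fun w hw => (sumsq_Dn w hw).le)
  | E8 =>
    exact main_pair rootsE8 0 1 2 (by decide) (by decide) (by decide) 1 1
      (Or.inl rfl) (Or.inl rfl)
      (Or.inl ⟨0, 1, 1, 1, by decide, Or.inl rfl, Or.inl rfl, by simp⟩)
      (Or.inl ⟨0, 2, 1, 1, by decide, Or.inl rfl, Or.inl rfl, by simp⟩)
      (fun w hw => (sumsq_E8 w hw).le)
  | E7 =>
    have orth : ∀ j : Fin 8, j ≠ 6 → j ≠ 7 →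
        ⟪stdVec 0 + (1 : ℝ) • stdVec j, stdVec 6 + stdVec 7⟫ = 0 := by
      intro j h6 h7
      simp only [inner_add_left, inner_add_right, real_inner_smul_left, inner_stdVec]
      simp [h6, h7]
    exact main_pair rootsE7 0 1 2 (by decide) (by decide) (by decide) 1 1
      (Or.inl rfl) (Or.inl rfl)
      ⟨Or.inl ⟨0, 1, 1, 1, by decide, Or.inl rfl, Or.inl rfl, by simp⟩,
        orth 1 (by decide) (by decide)⟩
      ⟨Or.inl ⟨0, 2, 1, 1, by decide, Or.inl rfl, Or.inl rfl, by simp⟩,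
        orth 2 (by decide) (by decide)⟩
      (fun w hw => (sumsq_E8 w hw.1).le)
  | E6 =>
    have orth : ∀ j : Fin 8, j ≠ 6 → j ≠ 7 →
        ⟪stdVec 0 + (1 : ℝ) • stdVec j, stdVec 6 + stdVec 7⟫ = 0 := by
      intro j h6 h7
      simp only [inner_add_left, inner_add_right, real_inner_smul_left, inner_stdVec]
      simp [h6, h7]
    have orth' : ∀ j : Fin 8, j ≠ 5 → j ≠ 6 →
        ⟪stdVec 0 + (1 : ℝ) • stdVec j, stdVec 5 - stdVec 6⟫ = 0 := by
      intro j h5 h6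
      simp only [inner_add_left, inner_sub_right, real_inner_smul_left, inner_stdVec]
      simp [h5, h6]
    exact main_pair rootsE6 0 1 2 (by decide) (by decide) (by decide) 1 1
      (Or.inl rfl) (Or.inl rfl)
      ⟨⟨Or.inl ⟨0, 1, 1, 1, by decide, Or.inl rfl, Or.inl rfl, by simp⟩,
        orth 1 (by decide) (by decide)⟩, orth' 1 (by decide) (by decide)⟩
      ⟨⟨Or.inl ⟨0, 2, 1, 1, by decide, Or.inl rfl, Or.inl rfl, by simp⟩,
        orth 2 (by decide) (by decide)⟩, orth' 2 (by decide) (by decide)⟩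
      (fun w hw => (sumsq_E8 w hw.1.1).le)
  | F4 =>
    exact main_pair rootsF4 0 1 2 (by decide) (by decide) (by decide) 1 1
      (Or.inl rfl) (Or.inl rfl)
      (Or.inl (Or.inl ⟨0, 1, 1, 1, by decide, Or.inl rfl, Or.inl rfl, by simp⟩))
      (Or.inl (Or.inl ⟨0, 2, 1, 1, by decide, Or.inl rfl, Or.inl rfl, by simp⟩))
      sumsq_F4
  | G2 => exact main_G2
end

section
/- Let V be a real inner product space with quaternionic structure I, J, K (I² = J² = K² = IJK = −id, all g-skew) and let R be an algebraic curvature tensor on V whose commutator with I satisfies [R_{X,Y}, I] = c·( g(JX,Y)K − g(KX,Y)J ) for all X, Y, where c = κ/(4n(n+2)). Then g(R_{X,IX}IY, Y) + 2c( g(JX,Y)² + g(KX,Y)² ) = g(R_{X,Y}Y, X) + g(R_{X,IY}IY, X) for all X, Y ∈ V. -/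
open RealInnerProductSpace

/-- Let `V` carry a quaternionic structure `I, J, K` (orthogonal complex
structures with quaternion relations) and let `R` be an algebraic curvature
tensor whose curvature operator satisfies the quaternion-Kähler commutator
identity `[R_{X,Y}, I] = c(g(JX,Y)K − g(KX,Y)J)` with `c = κ/(4n(n+2))`.
Then `g(R_{X,IX}IY, Y) + 2c(g(JX,Y)² + g(KX,Y)²)
= g(R_{X,Y}Y, X) + g(R_{X,IY}IY, X)` for all `X, Y`. -/
theorem qk_bisectional_vs_sectional {V : Type*} [NormedAddCommGroup V]
    [InnerProductSpace ℝ V] (n : ℕ) (hn : 0 < n) (κ : ℝ)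
    (I J K : V →ₗ[ℝ] V)
    (hI2 : ∀ v, I (I v) = -v) (hJ2 : ∀ v, J (J v) = -v)
    (hK2 : ∀ v, K (K v) = -v) (hIJK : ∀ v, I (J (K v)) = -v)
    (hIskew : ∀ v w, ⟪I v, w⟫ = -⟪v, I w⟫)
    (hJskew : ∀ v w, ⟪J v, w⟫ = -⟪v, J w⟫)
    (hKskew : ∀ v w, ⟪K v, w⟫ = -⟪v, K w⟫)
    (Rop : V →ₗ[ℝ] V →ₗ[ℝ] V →ₗ[ℝ] V)
    (hskew1 : ∀ X Y U W, ⟪Rop X Y U, W⟫ = -⟪Rop Y X U, W⟫)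
    (hskew2 : ∀ X Y U W, ⟪Rop X Y U, W⟫ = -⟪Rop X Y W, U⟫)
    (hpair : ∀ X Y U W, ⟪Rop X Y U, W⟫ = ⟪Rop U W X, Y⟫)
    (hbianchi : ∀ X Y U, Rop X Y U + Rop Y U X + Rop U X Y = 0)
    (hcomm : ∀ X Y U, Rop X Y (I U) - I (Rop X Y U) =
      (κ / (4 * (n : ℝ) * ((n : ℝ) + 2))) •
        (⟪J X, Y⟫ • K U - ⟪K X, Y⟫ • J U)) :
    ∀ X Y : V,
      ⟪Rop X (I X) (I Y), Y⟫ +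
        2 * (κ / (4 * (n : ℝ) * ((n : ℝ) + 2))) *
          (⟪J X, Y⟫ ^ 2 + ⟪K X, Y⟫ ^ 2) =
      ⟪Rop X Y Y, X⟫ + ⟪Rop X (I Y) (I Y), X⟫ := by
  intro X Y
  set c : ℝ := κ / (4 * (n : ℝ) * ((n : ℝ) + 2)) with hc
  -- quaternion algebra consequences
  have hIJ : ∀ v, I (J v) = K v := by
    intro v
    have h := hIJK (-(K v))
    simpa [map_neg, hK2, neg_neg] using h
  have hJK : ∀ v, J (K v) = I v := by
    intro v
    have h := congrArg I (hIJK v)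
    rw [hI2, map_neg] at h
    exact neg_injective h
  have hIK : ∀ v, I (K v) = -(J v) := by
    intro v
    have h := hI2 (J v)
    rw [show I (J v) = K v from hIJ v] at h
    -- h : I (K v) = -(J v)
    exact h
  have hKJ : ∀ v, K (J v) = -(I v) := by
    intro v
    have h := hIJ (J v)
    rw [hJ2, map_neg] at h
    exact h.symm
  have hJI : ∀ v, J (I v) = -(K v) := by
    intro v
    have h := hJK (K v)
    rw [hK2, map_neg] at h
    calc J (I v) = J (J (K v)) := by rw [hJK]
    _ = -(K v) := hJ2 _
  have hKI : ∀ v, K (I v) = J v := by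
    intro v
    calc K (I v) = K (J (K v)) := by rw [hJK]
    _ = -(I (K v)) := hKJ _
    _ = J v := by rw [hIK, neg_neg]
  -- inner product consequences
  have hII : ∀ u w : V, ⟪I u, I w⟫ = ⟪u, w⟫ := by
    intro u w
    rw [hIskew, hI2, inner_neg_right, neg_neg]
  have hKIin : ∀ u w : V, ⟪K u, I w⟫ = ⟪J u, w⟫ := by
    intro u w
    rw [hKskew, hKI, hJskew]
  have hJIin : ∀ u w : V, ⟪J u, I w⟫ = -⟪K u, w⟫ := by
    intro u w
    rw [hJskew, hJI, inner_neg_right, neg_neg, hKskew]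
    ring
  -- commutator in solved form
  have hRop : ∀ A B U : V, Rop A B (I U) =
      I (Rop A B U) + c • (⟪J A, B⟫ • K U - ⟪K A, B⟫ • J U) := by
    intro A B U
    have h := hcomm A B U
    rw [sub_eq_iff_eq_add] at h
    rw [h]; rw [add_comm]
  -- key lemma (*)
  have star : ∀ A B U W : V, ⟪Rop A B (I U), I W⟫ =
      ⟪Rop A B U, W⟫ + c * (⟪J A, B⟫ * ⟪J U, W⟫ + ⟪K A, B⟫ * ⟪K U, W⟫) := by
    intro A B U W
    rw [hRop A B U]
    rw [inner_add_left, real_inner_smul_left, inner_sub_left,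
      real_inner_smul_left, real_inner_smul_left, hII, hKIin, hJIin]
    ring
  -- Bianchi identity paired with Y
  have hB : ⟪Rop X (I X) (I Y), Y⟫ + ⟪Rop (I X) (I Y) X, Y⟫
      + ⟪Rop (I Y) X (I X), Y⟫ = 0 := by
    have h : ⟪Rop X (I X) (I Y) + Rop (I X) (I Y) X + Rop (I Y) X (I X), Y⟫
        = (0 : ℝ) := by
      rw [hbianchi X (I X) (I Y)]; simp
    simpa [inner_add_left] using h
  -- second term
  have h2 : ⟪Rop (I X) (I Y) X, Y⟫ = -⟪Rop X Y Y, X⟫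
      + c * (⟪J X, Y⟫ * ⟪J X, Y⟫ + ⟪K X, Y⟫ * ⟪K X, Y⟫) := by
    rw [hpair (I X) (I Y) X Y, star X Y X Y, hskew2 X Y X Y]
  -- third term
  have h3 : ⟪Rop (I Y) X (I X), Y⟫ = -⟪Rop X (I Y) (I Y), X⟫
      + c * (⟪J X, Y⟫ * ⟪J X, Y⟫ + ⟪K X, Y⟫ * ⟪K X, Y⟫) := by
    have hY : I (-(I Y)) = Y := by rw [map_neg, hI2, neg_neg]
    have h := star X (I Y) X (-(I Y))
    rw [hY] at h
    simp only [inner_neg_right] at h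
    rw [hskew2 X (I Y) X (I Y)] at h
    rw [hJIin X Y, hKIin X Y] at h
    rw [hskew1 (I Y) X (I X) Y, h]
    ring
  rw [h2, h3] at hB
  linear_combination hB
end
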